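/- Let X_1, X_2, … be finite nonnegative independent identically distributed real random variables whose common distribution is not concentrated on a single point, and define S_n = ∑_{i=1}^n X_i. Then for every real c > 0 there exist a positive integer n and a real number t such that P(S_n < t) < 1/2 but P(S_n < t − c) > 0. -/

import Mathlib

open MeasureTheory ProbabilityTheory
open scoped ENNReal

lemma block_sum_bound (f : ℕ → ℝ) (a b : ℝ) (m : ℕ) (hm : 1 ≤ m) :
    ∀ K : ℕ, (∀ j < K, ∃ i, j*m ≤ i ∧ i < j*m + m ∧ b ≤ f i) →
    (∀ i < K * m, a ≤ f i) →
    (K*m : ℝ) * a + K * (b - a) ≤ ∑ i ∈ Finset.range (K*m), f i := by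
  intro K
  induction K with
  | zero => simp
  | succ K ih =>
    intro hhit hlow
    have hsplit : ∑ i ∈ Finset.range (K*m), f i + ∑ i ∈ Finset.Ico (K*m) (K*m+m), f i
        = ∑ i ∈ Finset.range (K*m+m), f i := by
      rw [Finset.range_eq_Ico, Finset.range_eq_Ico]
      exact Finset.sum_Ico_consecutive f (Nat.zero_le _) (Nat.le_add_right _ _)
    have hKm : (K+1)*m = K*m + m := by ring
    obtain ⟨i₀, hi₀l, hi₀r, hi₀b⟩ := hhit K (Nat.lt_succ_self K)
    have hi₀mem : i₀ ∈ Finset.Ico (K*m) (K*m+m) := Finset.mem_Ico.mpr ⟨hi₀l, hi₀r⟩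
    have hblock : (m:ℝ) * a + (b - a) ≤ ∑ i ∈ Finset.Ico (K*m) (K*m+m), f i := by
      have herase : ((m-1 : ℕ) : ℝ) * a ≤ ∑ i ∈ (Finset.Ico (K*m) (K*m+m)).erase i₀, f i := by
        have := Finset.card_nsmul_le_sum ((Finset.Ico (K*m) (K*m+m)).erase i₀) f a
          (fun i hi => by
            have hi' := Finset.mem_of_mem_erase hi
            rw [Finset.mem_Ico] at hi'
            exact hlow i (by omega))
        rw [Finset.card_erase_of_mem hi₀mem, Nat.card_Ico] at this
        simpa [nsmul_eq_mul] using this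
      have hsum := Finset.add_sum_erase _ f hi₀mem
      have hcast : ((m-1 : ℕ) : ℝ) = (m:ℝ) - 1 := by
        rw [Nat.cast_sub hm]; norm_num
      rw [hcast] at herase
      linarith
    have hmain := ih (fun j hj => hhit j (by omega))
      (fun i hi => hlow i (by nlinarith [Nat.one_le_iff_ne_zero.mp hm]))
    rw [hKm, ← hsplit]
    push_cast
    nlinarith [hmain, hblock]

theorem exists_gap {Ω : Type*} [MeasurableSpace Ω]
    (μ : Measure Ω) [IsProbabilityMeasure μ] (X : ℕ → Ω → ℝ)
    (hXmeas : ∀ i, Measurable (X i))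
    (hXnonneg : ∀ i ω, 0 ≤ X i ω)
    (hind : iIndepFun X μ)
    (hid : ∀ i, Measure.map (X i) μ = Measure.map (X 0) μ)
    (hnondeg : ∀ a : ℝ, μ {ω | X 0 ω = a} ≠ 1)
    (c : ℝ) (hc : 0 < c) :
    ∃ n : ℕ, 0 < n ∧ ∃ t : ℝ,
      μ {ω | (∑ i ∈ Finset.range n, X i ω) < t} < 1 / 2 ∧
      0 < μ {ω | (∑ i ∈ Finset.range n, X i ω) < t - c} := by
  -- identical distributions on measurable sets
  have hsame : ∀ (A : Set ℝ), MeasurableSet A → ∀ i, μ (X i ⁻¹' A) = μ (X 0 ⁻¹' A) := by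
    intro A hA i
    rw [← Measure.map_apply (hXmeas i) hA, hid i, Measure.map_apply (hXmeas 0) hA]
  -- product formula
  have hprod : ∀ (s : Finset ℕ) (A : Set ℝ), MeasurableSet A →
      μ (⋂ i ∈ s, X i ⁻¹' A) = (μ (X 0 ⁻¹' A)) ^ s.card := by
    intro s A hA
    rw [hind.measure_inter_preimage_eq_mul s (sets := fun _ => A) (fun i _ => hA)]
    rw [Finset.prod_congr rfl (fun i _ => hsame A hA i), Finset.prod_const]
  -- the essential infimum
  set s : Set ℝ := {x : ℝ | 0 < μ {ω | X 0 ω ≤ x}} with hs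
  have hsne : s.Nonempty := by
    by_contra h
    rw [Set.not_nonempty_iff_eq_empty] at h
    have hz : ∀ k : ℕ, μ {ω | X 0 ω ≤ (k:ℝ)} = 0 := by
      intro k
      by_contra hk
      have : (k:ℝ) ∈ s := pos_iff_ne_zero.mpr hk
      simp [h] at this
    have hU : (⋃ k : ℕ, {ω | X 0 ω ≤ (k:ℝ)}) = Set.univ := by
      ext ω; simp only [Set.mem_iUnion, Set.mem_univ, iff_true]
      obtain ⟨k, hk⟩ := exists_nat_ge (X 0 ω)
      exact ⟨k, hk⟩
    have := measure_iUnion_null hz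
    rw [hU] at this
    simp at this
  have hsbdd : BddBelow s := by
    refine ⟨0, fun x hx => ?_⟩
    by_contra hx0
    push_neg at hx0
    have : {ω | X 0 ω ≤ x} = ∅ := by
      ext ω; simp only [Set.mem_setOf_eq, Set.mem_empty_iff_false, iff_false, not_le]
      exact lt_of_lt_of_le hx0 (hXnonneg 0 ω)
    rw [hs] at hx
    simp only [Set.mem_setOf_eq, this, measure_empty] at hx
    exact lt_irrefl _ hx
  set a₀ : ℝ := sInf s with ha₀
  have hlow : ∀ ε : ℝ, 0 < ε → 0 < μ {ω | X 0 ω ≤ a₀ + ε} := by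
    intro ε hε
    have hex : ∃ x ∈ s, x < a₀ + ε := (csInf_lt_iff hsbdd hsne).mp (by linarith)
    obtain ⟨x, hxs, hxlt⟩ := hex
    exact lt_of_lt_of_le hxs (measure_mono (fun ω hω => le_trans hω hxlt.le))
  have hnull : μ {ω | X 0 ω < a₀} = 0 := by
    have : {ω | X 0 ω < a₀} ⊆ ⋃ k : ℕ, {ω | X 0 ω ≤ a₀ - 1/(k+1)} := by
      intro ω hω
      simp only [Set.mem_setOf_eq] at hω
      obtain ⟨k, hk⟩ := exists_nat_one_div_lt (sub_pos.mpr hω)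
      exact Set.mem_iUnion.mpr ⟨k, by simp only [Set.mem_setOf_eq]; linarith⟩
    refine measure_mono_null this (measure_iUnion_null fun k => ?_)
    by_contra hk
    have hmem : a₀ - 1/(k+1) ∈ s := pos_iff_ne_zero.mpr hk
    have := csInf_le hsbdd hmem
    have hpos : (0:ℝ) < 1/(k+1) := by positivity
    linarith [this]
  -- existence of b
  have hb : ∃ b : ℝ, a₀ < b ∧ 0 < μ {ω | b ≤ X 0 ω} := by
    by_contra h
    push_neg at h
    have hgt : μ {ω | a₀ < X 0 ω} = 0 := by
      have hsub : {ω | a₀ < X 0 ω} ⊆ ⋃ k : ℕ, {ω | a₀ + 1/(k+1) ≤ X 0 ω} := by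
        intro ω hω
        simp only [Set.mem_setOf_eq] at hω
        obtain ⟨k, hk⟩ := exists_nat_one_div_lt (sub_pos.mpr hω)
        exact Set.mem_iUnion.mpr ⟨k, by simp only [Set.mem_setOf_eq]; linarith⟩
      refine measure_mono_null hsub (measure_iUnion_null fun k => ?_)
      have h1 : (0:ℝ) < 1/((k:ℝ)+1) := by positivity
      have hpos : a₀ < a₀ + 1/((k:ℝ)+1) := by linarith
      exact le_zero_iff.mp (h (a₀ + 1/((k:ℝ)+1)) hpos)
    have hne : μ {ω | X 0 ω ≠ a₀} = 0 := by
      have hsub : {ω | X 0 ω ≠ a₀} ⊆ {ω | X 0 ω < a₀} ∪ {ω | a₀ < X 0 ω} := by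
        intro ω hω
        rcases lt_or_gt_of_ne hω with h1 | h1
        · exact Or.inl h1
        · exact Or.inr h1
      exact measure_mono_null hsub (by
        refine measure_union_null hnull hgt)
    have heq : μ {ω | X 0 ω = a₀} = 1 := by
      have hcompl : {ω | X 0 ω = a₀}ᶜ = {ω | X 0 ω ≠ a₀} := rfl
      have hmeas : MeasurableSet {ω | X 0 ω = a₀} := (hXmeas 0) (measurableSet_singleton a₀)
      have := measure_add_measure_compl (μ := μ) hmeas
      rw [hcompl, hne, add_zero, measure_univ] at this
      exact this
    exact hnondeg a₀ heq
  obtain ⟨b, hab, hq⟩ := hb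
  -- r = P(X < b) < 1
  set r : ℝ≥0∞ := μ {ω | X 0 ω < b} with hr
  have hrlt : r < 1 := by
    have hcompl : {ω | X 0 ω < b} = {ω | b ≤ X 0 ω}ᶜ := by
      ext ω; simp [not_le]
    have hmeas : MeasurableSet {ω | b ≤ X 0 ω} := (hXmeas 0) measurableSet_Ici
    rw [hr, hcompl, measure_compl hmeas (measure_ne_top μ _), measure_univ]
    exact ENNReal.sub_lt_self ENNReal.one_ne_top one_ne_zero hq.ne'
  -- choose K
  have hba : 0 < b - a₀ := sub_pos.mpr hab
  obtain ⟨K, hKgt⟩ := exists_nat_gt (c / (b - a₀))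
  have hKc : c < K * (b - a₀) := by
    rwa [div_lt_iff₀ hba] at hKgt
  have hK1 : 1 ≤ K := by
    by_contra h
    push_neg at h
    interval_cases K
    simp at hKc
    linarith
  -- choose m
  have htend : Filter.Tendsto (fun m : ℕ => (K : ℝ≥0∞) * r ^ m) Filter.atTop (nhds 0) := by
    have h0 : Filter.Tendsto (fun m : ℕ => r ^ m) Filter.atTop (nhds 0) :=
      ENNReal.tendsto_pow_atTop_nhds_zero_of_lt_one hrlt
    have := ENNReal.Tendsto.const_mul h0 (Or.inr (ENNReal.natCast_ne_top K))
    simpa using this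
  have hev : ∀ᶠ m : ℕ in Filter.atTop, (K : ℝ≥0∞) * r ^ m < 1/2 :=
    htend.eventually_lt_const (by norm_num)
  obtain ⟨m, hm, hm1⟩ := (hev.and (Filter.eventually_ge_atTop 1)).exists
  set n : ℕ := K * m with hn
  have hnpos : 0 < n := Nat.mul_pos (by omega) (by omega)
  set t : ℝ := (n : ℝ) * a₀ + K * (b - a₀) with ht
  refine ⟨n, hnpos, t, ?_, ?_⟩
  · -- first claim
    have hsub : {ω | (∑ i ∈ Finset.range n, X i ω) < t} ⊆
        (⋃ i ∈ Finset.range n, X i ⁻¹' Set.Iio a₀) ∪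
        ⋃ j ∈ Finset.range K, ⋂ i ∈ Finset.Ico (j*m) (j*m+m), X i ⁻¹' Set.Iio b := by
      intro ω hω
      simp only [Set.mem_setOf_eq] at hω
      by_contra hmem
      simp only [Set.mem_union, Set.mem_iUnion, Set.mem_iInter, Set.mem_preimage,
        Set.mem_Iio, Finset.mem_range, Finset.mem_Ico, not_or, not_exists, not_and,
        not_forall, not_lt, exists_prop] at hmem
      obtain ⟨h1, h2⟩ := hmem
      have hlb := block_sum_bound (fun i => X i ω) a₀ b m hm1 K
        (fun j hj => by
          obtain ⟨i, hi1, hi2⟩ := h2 j hj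
          exact ⟨i, hi1.1, hi1.2, hi2⟩)
        (fun i hi => h1 i hi)
      rw [ht, hn] at hω
      push_cast at hω hlb
      linarith
    have hA : μ (⋃ i ∈ Finset.range n, X i ⁻¹' Set.Iio a₀) = 0 := by
      refine measure_biUnion_null_iff (Finset.countable_toSet _) |>.mpr fun i _ => ?_
      rw [hsame (Set.Iio a₀) measurableSet_Iio i]
      exact hnull
    have hC : ∀ j, μ (⋂ i ∈ Finset.Ico (j*m) (j*m+m), X i ⁻¹' Set.Iio b) = r ^ m := by
      intro j
      rw [hprod (Finset.Ico (j*m) (j*m+m)) (Set.Iio b) measurableSet_Iio, Nat.card_Ico]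
      congr 1
      omega
    calc μ {ω | (∑ i ∈ Finset.range n, X i ω) < t}
        ≤ μ ((⋃ i ∈ Finset.range n, X i ⁻¹' Set.Iio a₀) ∪
            ⋃ j ∈ Finset.range K, ⋂ i ∈ Finset.Ico (j*m) (j*m+m), X i ⁻¹' Set.Iio b) :=
          measure_mono hsub
      _ ≤ μ (⋃ i ∈ Finset.range n, X i ⁻¹' Set.Iio a₀) +
            μ (⋃ j ∈ Finset.range K, ⋂ i ∈ Finset.Ico (j*m) (j*m+m), X i ⁻¹' Set.Iio b) :=
          measure_union_le _ _
      _ ≤ 0 + ∑ j ∈ Finset.range K, μ (⋂ i ∈ Finset.Ico (j*m) (j*m+m), X i ⁻¹' Set.Iio b) := by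
          rw [hA]
          exact add_le_add le_rfl (measure_biUnion_finset_le _ _)
      _ = (K : ℝ≥0∞) * r ^ m := by
          rw [zero_add, Finset.sum_congr rfl (fun j _ => hC j), Finset.sum_const,
            Finset.card_range, nsmul_eq_mul]
      _ < 1/2 := hm
  · -- second claim
    have hd : 0 < (K : ℝ) * (b - a₀) - c := by linarith
    set ε : ℝ := ((K : ℝ) * (b - a₀) - c) / (2 * n) with hε
    have hεpos : 0 < ε := by
      apply div_pos hd
      positivity
    have hp : 0 < μ (X 0 ⁻¹' Set.Iic (a₀ + ε)) := hlow ε hεpos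
    have hDsub : (⋂ i ∈ Finset.range n, X i ⁻¹' Set.Iic (a₀ + ε)) ⊆
        {ω | (∑ i ∈ Finset.range n, X i ω) < t - c} := by
      intro ω hω
      simp only [Set.mem_iInter, Set.mem_preimage, Set.mem_Iic, Finset.mem_range] at hω
      simp only [Set.mem_setOf_eq]
      have hsum : (∑ i ∈ Finset.range n, X i ω) ≤ (n : ℝ) * (a₀ + ε) := by
        calc (∑ i ∈ Finset.range n, X i ω) ≤ ∑ _i ∈ Finset.range n, (a₀ + ε) :=
              Finset.sum_le_sum (fun i hi => hω i (Finset.mem_range.mp hi))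
          _ = (n : ℝ) * (a₀ + ε) := by rw [Finset.sum_const, Finset.card_range, nsmul_eq_mul]
      have hnε : (n : ℝ) * ε = ((K : ℝ) * (b - a₀) - c) / 2 := by
        rw [hε]
        field_simp
      rw [ht]
      have hnne : (0:ℝ) < (n:ℝ) := by exact_mod_cast hnpos
      nlinarith
    calc (0 : ℝ≥0∞) < (μ (X 0 ⁻¹' Set.Iic (a₀ + ε))) ^ n := ENNReal.pow_pos hp n
      _ = μ (⋂ i ∈ Finset.range n, X i ⁻¹' Set.Iic (a₀ + ε)) := by
          rw [hprod (Finset.range n) (Set.Iic (a₀ + ε)) measurableSet_Iic, Finset.card_range]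
      _ ≤ μ {ω | (∑ i ∈ Finset.range n, X i ω) < t - c} := measure_mono hDsub
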